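/- For f(x) = Σ_{1≤i<j≤n} x_i x_j and x ∈ [0,1]^n with s = ⌊x_1 + ... + x_n⌋, the convex envelope of f over [0,1]^n at x equals s(x_1 + ... + x_n) − s(s+1)/2. -/

import Mathlib

open Set

namespace Stmt3Aux

open Finset

def Vset (n : ℕ) (s : ℤ) : Set (Fin n → ℝ) :=
  {ξ | (∀ i, ξ i = 0 ∨ ξ i = 1) ∧ ((∑ i, ξ i) = (s:ℝ) ∨ (∑ i, ξ i) = (s:ℝ) + 1)}

def Gset (n : ℕ) : Set ((Fin n → ℝ) × ℝ) :=
  {p : (Fin n → ℝ) × ℝ | (∀ i, p.1 i = 0 ∨ p.1 i = 1) ∧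
    p.2 = ∑ i, ∑ j, if i < j then p.1 i * p.1 j else 0}

lemma binary_sum_nat' {n : ℕ} (s : Finset (Fin n)) (x : Fin n → ℝ)
    (hb : ∀ i ∈ s, x i = 0 ∨ x i = 1) :
    ∃ k : ℕ, ∑ i ∈ s, x i = (k : ℝ) := by
  refine ⟨(s.filter fun i => x i = 1).card, ?_⟩
  rw [← Finset.sum_boole]
  refine Finset.sum_congr rfl fun i hi => ?_
  rcases hb i hi with h | h <;> simp [h]

lemma binary_f_val {n : ℕ} (x : Fin n → ℝ) (hb : ∀ i, x i = 0 ∨ x i = 1) :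
    2 * (∑ i, ∑ j, if i < j then x i * x j else 0) = (∑ i, x i)^2 - ∑ i, x i := by
  have hsq : (∑ i, x i)^2 = ∑ i, ∑ j, x i * x j := by
    rw [sq, Finset.sum_mul_sum]
  have e1 : ∀ i j : Fin n, x i * x j =
      (if i < j then x i * x j else 0) + (if j < i then x i * x j else 0)
        + (if i = j then x i * x j else 0) := by
    intro i j
    rcases lt_trichotomy i j with h | h | h
    · simp [h, asymm h, h.ne]
    · simp [h, lt_irrefl]
    · simp [h, asymm h, h.ne']
  have hdiag : (∑ i, ∑ j, if i = j then x i * x j else 0) = ∑ i, x i := by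
    refine Finset.sum_congr rfl fun i _ => ?_
    rw [Finset.sum_ite_eq Finset.univ i (fun j => x i * x j)]
    rcases hb i with h | h <;> simp [h]
  have hswap : (∑ i, ∑ j, if j < i then x i * x j else 0)
      = ∑ i, ∑ j, if i < j then x i * x j else 0 := by
    rw [Finset.sum_comm]
    refine Finset.sum_congr rfl fun i _ => Finset.sum_congr rfl fun j _ => ?_
    rw [mul_comm]
  have : (∑ i, ∑ j, x i * x j)
      = (∑ i, ∑ j, if i < j then x i * x j else 0)
        + (∑ i, ∑ j, if j < i then x i * x j else 0)
        + (∑ i, ∑ j, if i = j then x i * x j else 0) := by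
    rw [← Finset.sum_add_distrib, ← Finset.sum_add_distrib]
    refine Finset.sum_congr rfl fun i _ => ?_
    rw [← Finset.sum_add_distrib, ← Finset.sum_add_distrib]
    exact Finset.sum_congr rfl fun j _ => e1 i j
  rw [hsq, this, hswap, hdiag]; ring

lemma lower_bound {n : ℕ} (s : ℤ) :
    convexHull ℝ (Gset n) ⊆
      {p : (Fin n → ℝ) × ℝ | (s:ℝ) * (∑ i, p.1 i) - (s:ℝ) * ((s:ℝ)+1)/2 ≤ p.2} := by
  apply convexHull_min
  · rintro ⟨ξ, w⟩ ⟨hb, hw⟩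
    obtain ⟨k, hk⟩ := binary_sum_nat' Finset.univ ξ (fun i _ => hb i)
    have hf := binary_f_val ξ hb
    simp only [Set.mem_setOf_eq]
    have hq : (0:ℝ) ≤ (((k:ℤ) - s : ℤ) : ℝ) * ((((k:ℤ) - s : ℤ) : ℝ) - 1) := by
      have : (0:ℤ) ≤ ((k:ℤ) - s) * (((k:ℤ) - s) - 1) := by
        rcases le_or_gt ((k:ℤ) - s) 0 with h | h
        · nlinarith
        · nlinarith
      exact_mod_cast this
    push_cast at hq
    simp only at hw
    rw [hw] at *
    rw [hk] at hf ⊢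
    nlinarith [hf, hq]
  · intro p hp q hq a b ha hb hab
    simp only [Set.mem_setOf_eq] at *
    have h1 : ∑ i, (a • p + b • q).1 i = a * (∑ i, p.1 i) + b * (∑ i, q.1 i) := by
      simp only [Prod.fst_add, Prod.smul_fst, Pi.add_apply, Pi.smul_apply, smul_eq_mul]
      rw [Finset.sum_add_distrib, Finset.mul_sum, Finset.mul_sum]
    rw [h1]
    have h2 : (a • p + b • q).2 = a * p.2 + b * q.2 := by
      simp [Prod.snd_add, Prod.smul_snd, smul_eq_mul]
    rw [h2]
    have e : (s:ℝ) * (a * (∑ i, p.1 i) + b * (∑ i, q.1 i)) - (s:ℝ) * ((s:ℝ)+1)/2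
        = a * ((s:ℝ) * (∑ i, p.1 i) - (s:ℝ) * ((s:ℝ)+1)/2)
          + b * ((s:ℝ) * (∑ i, q.1 i) - (s:ℝ) * ((s:ℝ)+1)/2) := by
      linear_combination ((s:ℝ) * ((s:ℝ)+1)/2) * hab
    rw [e]
    exact add_le_add (mul_le_mul_of_nonneg_left hp ha) (mul_le_mul_of_nonneg_left hq hb)

lemma decomp {n : ℕ} (m : ℕ) : ∀ (x : Fin n → ℝ), (∀ i, x i ∈ Set.Icc (0:ℝ) 1) →
    (Finset.univ.filter fun i => x i ≠ 0 ∧ x i ≠ 1).card ≤ m →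
    x ∈ convexHull ℝ (Vset n ⌊∑ i, x i⌋) := by
  induction m with
  | zero =>
    intro x hx hcard
    have hF : (Finset.univ.filter fun i => x i ≠ 0 ∧ x i ≠ 1) = ∅ :=
      Finset.card_eq_zero.mp (Nat.le_zero.mp hcard)
    have hb : ∀ i, x i = 0 ∨ x i = 1 := by
      intro i
      by_contra h
      push_neg at h
      have : i ∈ (Finset.univ.filter fun i => x i ≠ 0 ∧ x i ≠ 1) := by
        simp [h.1, h.2]
      rw [hF] at this; exact absurd this (Finset.notMem_empty i)
    obtain ⟨k, hk⟩ := binary_sum_nat' Finset.univ x (fun i _ => hb i)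
    apply subset_convexHull
    refine ⟨hb, Or.inl ?_⟩
    rw [hk]; norm_num
  | succ m ih =>
    intro x hx hcard
    set F := (Finset.univ.filter fun i => x i ≠ 0 ∧ x i ≠ 1) with hFdef
    by_cases hle : F.card ≤ m
    · exact ih x hx hle
    by_cases h2 : ∃ i ∈ F, ∃ j ∈ F, i ≠ j
    · -- swap case
      obtain ⟨i, hi, j, hj, hij⟩ := h2
      have hxi := hx i; have hxj := hx j
      simp only [hFdef, Finset.mem_filter, Finset.mem_univ, true_and] at hi hj
      have hi0 : 0 < x i := lt_of_le_of_ne hxi.1 (Ne.symm hi.1)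
      have hi1 : x i < 1 := lt_of_le_of_ne hxi.2 hi.2
      have hj0 : 0 < x j := lt_of_le_of_ne hxj.1 (Ne.symm hj.1)
      have hj1 : x j < 1 := lt_of_le_of_ne hxj.2 hj.2
      set δ := min (1 - x i) (x j) with hδdef
      set δ' := min (x i) (1 - x j) with hδ'def
      have hδ : 0 < δ := lt_min (by linarith) hj0
      have hδ' : 0 < δ' := lt_min hi0 (by linarith)
      set y : Fin n → ℝ := fun k => x k + ((if k = i then δ else 0) + (if k = j then -δ else 0)) with hydef
      set z : Fin n → ℝ := fun k => x k + ((if k = i then -δ' else 0) + (if k = j then δ' else 0)) with hzdef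
      have hyi : y i = x i + δ := by simp [hydef, hij]
      have hyj : y j = x j - δ := by simp [hydef, hij.symm]; ring
      have hyk : ∀ k, k ≠ i → k ≠ j → y k = x k := by intro k h1 h2; simp [hydef, h1, h2]
      have hzi : z i = x i - δ' := by simp [hzdef, hij]; ring
      have hzj : z j = x j + δ' := by simp [hzdef, hij.symm]
      have hzk : ∀ k, k ≠ i → k ≠ j → z k = x k := by intro k h1 h2; simp [hzdef, h1, h2]
      have hysum : ∑ k, y k = ∑ k, x k := by
        simp only [hydef]
        rw [Finset.sum_add_distrib, Finset.sum_add_distrib,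
          Finset.sum_ite_eq' Finset.univ i (fun _ => δ),
          Finset.sum_ite_eq' Finset.univ j (fun _ => -δ)]
        simp
      have hzsum : ∑ k, z k = ∑ k, x k := by
        simp only [hzdef]
        rw [Finset.sum_add_distrib, Finset.sum_add_distrib,
          Finset.sum_ite_eq' Finset.univ i (fun _ => -δ'),
          Finset.sum_ite_eq' Finset.univ j (fun _ => δ')]
        simp
      have hyIcc : ∀ k, y k ∈ Set.Icc (0:ℝ) 1 := by
        intro k
        by_cases h1 : k = i
        · subst h1
          have := min_le_left (1 - x k) (x j)
          constructor
          · rw [hyi]; positivity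
          · rw [hyi]; linarith
        by_cases h2 : k = j
        · subst h2
          have := min_le_right (1 - x i) (x k)
          constructor
          · rw [hyj]; linarith
          · rw [hyj]; linarith [(hx k).2]
        · rw [hyk k h1 h2]; exact hx k
      have hzIcc : ∀ k, z k ∈ Set.Icc (0:ℝ) 1 := by
        intro k
        by_cases h1 : k = i
        · subst h1
          have := min_le_left (x k) (1 - x j)
          constructor
          · rw [hzi]; linarith
          · rw [hzi]; linarith [(hx k).2]
        by_cases h2 : k = j
        · subst h2
          have := min_le_right (x i) (1 - x k)
          constructor
          · rw [hzj]; positivity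
          · rw [hzj]; linarith
        · rw [hzk k h1 h2]; exact hx k
      have hsubY : (Finset.univ.filter fun k => y k ≠ 0 ∧ y k ≠ 1) ⊆ F := by
        intro k hk
        by_cases h1 : k = i
        · subst h1; simpa [hFdef] using hi
        by_cases h2 : k = j
        · subst h2; simpa [hFdef] using hj
        · simp only [Finset.mem_filter, Finset.mem_univ, true_and] at hk
          rw [hyk k h1 h2] at hk
          rw [hFdef]
          simp only [Finset.mem_filter, Finset.mem_univ, true_and]
          exact hk
      have hsubZ : (Finset.univ.filter fun k => z k ≠ 0 ∧ z k ≠ 1) ⊆ F := by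
        intro k hk
        by_cases h1 : k = i
        · subst h1; simpa [hFdef] using hi
        by_cases h2 : k = j
        · subst h2; simpa [hFdef] using hj
        · simp only [Finset.mem_filter, Finset.mem_univ, true_and] at hk
          rw [hzk k h1 h2] at hk
          rw [hFdef]
          simp only [Finset.mem_filter, Finset.mem_univ, true_and]
          exact hk
      have hcardY : (Finset.univ.filter fun k => y k ≠ 0 ∧ y k ≠ 1).card ≤ m := by
        have hlt : (Finset.univ.filter fun k => y k ≠ 0 ∧ y k ≠ 1).card < F.card := by
          apply Finset.card_lt_card
          rw [Finset.ssubset_iff_of_subset hsubY]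
          rcases min_cases (1 - x i) (x j) with ⟨he, _⟩ | ⟨he, _⟩
          · refine ⟨i, by simpa [hFdef] using hi, ?_⟩
            simp only [Finset.mem_filter, Finset.mem_univ, true_and, not_and_or, not_not]
            right; rw [hyi, hδdef, he]; ring
          · refine ⟨j, by simpa [hFdef] using hj, ?_⟩
            simp only [Finset.mem_filter, Finset.mem_univ, true_and, not_and_or, not_not]
            left; rw [hyj, hδdef, he]; ring
        omega
      have hcardZ : (Finset.univ.filter fun k => z k ≠ 0 ∧ z k ≠ 1).card ≤ m := by
        have hlt : (Finset.univ.filter fun k => z k ≠ 0 ∧ z k ≠ 1).card < F.card := by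
          apply Finset.card_lt_card
          rw [Finset.ssubset_iff_of_subset hsubZ]
          rcases min_cases (x i) (1 - x j) with ⟨he, _⟩ | ⟨he, _⟩
          · refine ⟨i, by simpa [hFdef] using hi, ?_⟩
            simp only [Finset.mem_filter, Finset.mem_univ, true_and, not_and_or, not_not]
            left; rw [hzi, hδ'def, he]; ring
          · refine ⟨j, by simpa [hFdef] using hj, ?_⟩
            simp only [Finset.mem_filter, Finset.mem_univ, true_and, not_and_or, not_not]
            right; rw [hzj, hδ'def, he]; ring
        omega
      have hyhull := ih y hyIcc hcardY
      have hzhull := ih z hzIcc hcardZ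
      rw [hysum] at hyhull
      rw [hzsum] at hzhull
      have hne : δ + δ' ≠ 0 := by positivity
      have hab : δ' / (δ + δ') + δ / (δ + δ') = 1 := by
        field_simp; ring
      have hxcomb : x = (δ' / (δ + δ')) • y + (δ / (δ + δ')) • z := by
        funext k
        simp only [Pi.add_apply, Pi.smul_apply, smul_eq_mul, hydef, hzdef]
        by_cases h1 : k = i
        · subst h1; simp only [if_pos rfl, if_neg hij, ↓reduceIte]
          field_simp; ring
        by_cases h2 : k = j
        · subst h2; simp only [if_neg h1, if_pos rfl, if_neg (fun h => h1 h), ↓reduceIte]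
          field_simp; ring
        · simp only [if_neg h1, if_neg h2]
          field_simp; ring
      have hmem := (convex_convexHull ℝ _) hyhull hzhull
        (by positivity) (by positivity) hab
      rwa [← hxcomb] at hmem
    · -- at most one fractional coordinate; since card > m ≥ 0, exactly one... or m ≥ card impossible
      push_neg at h2
      have hcard1 : F.card ≤ 1 := Finset.card_le_one.mpr h2
      have hF1 : F.card = 1 := le_antisymm hcard1 (by omega)
      obtain ⟨i, hFi⟩ := Finset.card_eq_one.mp hF1
      have hiF : i ∈ F := by rw [hFi]; exact Finset.mem_singleton_self i
      have hib : x i ≠ 0 ∧ x i ≠ 1 := by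
        simpa [hFdef] using hiF
      have hi0 : 0 < x i := lt_of_le_of_ne (hx i).1 (Ne.symm hib.1)
      have hi1 : x i < 1 := lt_of_le_of_ne (hx i).2 hib.2
      have hbk : ∀ k, k ≠ i → (x k = 0 ∨ x k = 1) := by
        intro k hk
        by_contra h
        push_neg at h
        have : k ∈ F := by simp [hFdef, h.1, h.2]
        rw [hFi] at this
        exact hk (Finset.mem_singleton.mp this)
      obtain ⟨K, hK⟩ := binary_sum_nat' (Finset.univ.erase i) x
        (fun k hk => hbk k (Finset.ne_of_mem_erase hk))
      have hsum : ∑ k, x k = x i + (K:ℝ) := by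
        rw [← hK, Finset.add_sum_erase _ x (Finset.mem_univ i)]
      have hfloor : ⌊∑ k, x k⌋ = (K:ℤ) := by
        rw [hsum]
        rw [add_comm]
        rw [show ((K:ℝ) = ((K:ℤ):ℝ)) by norm_num, Int.floor_intCast_add]
        rw [Int.floor_eq_zero_iff.mpr ⟨le_of_lt hi0, hi1⟩]
        ring
      set x0 : Fin n → ℝ := Function.update x i 0 with hx0def
      set x1 : Fin n → ℝ := Function.update x i 1 with hx1def
      have hx0b : ∀ k, x0 k = 0 ∨ x0 k = 1 := by
        intro k
        by_cases hk : k = i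
        · subst hk; left; simp [hx0def]
        · rw [hx0def, Function.update_of_ne hk]; exact hbk k hk
      have hx1b : ∀ k, x1 k = 0 ∨ x1 k = 1 := by
        intro k
        by_cases hk : k = i
        · subst hk; right; simp [hx1def]
        · rw [hx1def, Function.update_of_ne hk]; exact hbk k hk
      have hx0sum : ∑ k, x0 k = (K:ℝ) := by
        rw [hx0def, ← hK, ← Finset.add_sum_erase _ _ (Finset.mem_univ i),
          Function.update_self]
        rw [zero_add]
        refine Finset.sum_congr rfl fun k hk => ?_
        rw [Function.update_of_ne (Finset.ne_of_mem_erase hk)]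
      have hx1sum : ∑ k, x1 k = (K:ℝ) + 1 := by
        rw [hx1def, ← Finset.add_sum_erase _ _ (Finset.mem_univ i),
          Function.update_self]
        have : ∑ k ∈ Finset.univ.erase i, Function.update x i 1 k = (K:ℝ) := by
          rw [← hK]
          refine Finset.sum_congr rfl fun k hk => ?_
          rw [Function.update_of_ne (Finset.ne_of_mem_erase hk)]
        rw [this]; ring
      have h0mem : x0 ∈ Vset n ⌊∑ k, x k⌋ := by
        refine ⟨hx0b, Or.inl ?_⟩
        rw [hx0sum, hfloor]; norm_num
      have h1mem : x1 ∈ Vset n ⌊∑ k, x k⌋ := by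
        refine ⟨hx1b, Or.inr ?_⟩
        rw [hx1sum, hfloor]; norm_num
      have hxcomb : x = (1 - x i) • x0 + (x i) • x1 := by
        funext k
        simp only [Pi.add_apply, Pi.smul_apply, smul_eq_mul]
        by_cases hk : k = i
        · subst hk; simp [hx0def, hx1def]
        · rw [hx0def, hx1def, Function.update_of_ne hk, Function.update_of_ne hk]; ring
      have hmem := (convex_convexHull ℝ _) (subset_convexHull ℝ _ h0mem)
        (subset_convexHull ℝ _ h1mem) (by linarith : (0:ℝ) ≤ 1 - x i)
        (le_of_lt hi0) (by ring : (1 - x i) + x i = 1)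
      rwa [← hxcomb] at hmem

lemma vset_sub {n : ℕ} (s : ℤ) :
    Vset n s ⊆ {ξ : Fin n → ℝ |
      (ξ, (s:ℝ) * (∑ i, ξ i) - (s:ℝ)*((s:ℝ)+1)/2) ∈ convexHull ℝ (Gset n)} := by
  rintro ξ ⟨hb, hsum⟩
  apply subset_convexHull
  refine ⟨hb, ?_⟩
  have hf := binary_f_val ξ hb
  simp only
  rcases hsum with h | h <;> rw [h] at hf ⊢ <;> nlinarith [hf]

lemma conv_T {n : ℕ} (s : ℤ) :
    Convex ℝ {ξ : Fin n → ℝ |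
      (ξ, (s:ℝ) * (∑ i, ξ i) - (s:ℝ)*((s:ℝ)+1)/2) ∈ convexHull ℝ (Gset n)} := by
  intro ξ₁ h₁ ξ₂ h₂ a b ha hb hab
  simp only [Set.mem_setOf_eq] at *
  have hcomb := (convex_convexHull ℝ (Gset n)) h₁ h₂ ha hb hab
  have heq : a • (ξ₁, (s:ℝ) * (∑ i, ξ₁ i) - (s:ℝ)*((s:ℝ)+1)/2)
      + b • (ξ₂, (s:ℝ) * (∑ i, ξ₂ i) - (s:ℝ)*((s:ℝ)+1)/2)
      = (a • ξ₁ + b • ξ₂,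
          (s:ℝ) * (∑ i, (a • ξ₁ + b • ξ₂) i) - (s:ℝ)*((s:ℝ)+1)/2) := by
    have hsum : ∑ i, (a • ξ₁ + b • ξ₂) i = a * (∑ i, ξ₁ i) + b * (∑ i, ξ₂ i) := by
      simp only [Pi.add_apply, Pi.smul_apply, smul_eq_mul]
      rw [Finset.sum_add_distrib, Finset.mul_sum, Finset.mul_sum]
    rw [Prod.ext_iff]
    constructor
    · rfl
    · simp only [Prod.snd_add, Prod.smul_snd, smul_eq_mul, hsum]
      linear_combination (-((s:ℝ) * ((s:ℝ)+1)/2)) * hab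
  rwa [heq] at hcomb

lemma mem_hull {n : ℕ} (x : Fin n → ℝ) (hx : ∀ i, x i ∈ Set.Icc (0:ℝ) 1) :
    (x, ((⌊∑ i, x i⌋:ℤ):ℝ) * (∑ i, x i)
        - ((⌊∑ i, x i⌋:ℤ):ℝ) * (((⌊∑ i, x i⌋:ℤ):ℝ)+1)/2) ∈ convexHull ℝ (Gset n) := by
  have hdec := decomp (Fintype.card (Fin n)) x hx
    (le_trans (Finset.card_filter_le _ _) (by simp))
  have hsub : convexHull ℝ (Vset n ⌊∑ i, x i⌋) ⊆
      {ξ : Fin n → ℝ | (ξ, ((⌊∑ i, x i⌋:ℤ):ℝ) * (∑ i, ξ i)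
        - ((⌊∑ i, x i⌋:ℤ):ℝ)*(((⌊∑ i, x i⌋:ℤ):ℝ)+1)/2) ∈ convexHull ℝ (Gset n)} :=
    convexHull_min (vset_sub _) (conv_T _)
  exact hsub hdec

end Stmt3Aux

/-- For `f(x) = ∑_{i<j} x_i x_j` and `x ∈ [0,1]^n` with `s = ⌊x_1 + ⋯ + x_n⌋`,
the convex envelope of `f` over `[0,1]^n` at `x` equals
`s(x_1 + ⋯ + x_n) − s(s+1)/2`. -/
theorem stmt3 (n : ℕ) (x : Fin n → ℝ) (hx : ∀ i, x i ∈ Set.Icc (0:ℝ) 1) :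
    sInf {z : ℝ | (x, z) ∈ convexHull ℝ
        {p : (Fin n → ℝ) × ℝ | (∀ i, p.1 i = 0 ∨ p.1 i = 1) ∧
          p.2 = ∑ i, ∑ j, if i < j then p.1 i * p.1 j else 0}}
      = (⌊∑ i, x i⌋ : ℝ) * (∑ i, x i)
        - (⌊∑ i, x i⌋ : ℝ) * ((⌊∑ i, x i⌋ : ℝ) + 1) / 2 := by
  have hG : {p : (Fin n → ℝ) × ℝ | (∀ i, p.1 i = 0 ∨ p.1 i = 1) ∧
      p.2 = ∑ i, ∑ j, if i < j then p.1 i * p.1 j else 0} = Stmt3Aux.Gset n := rfl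
  rw [hG]
  set w : ℝ := (⌊∑ i, x i⌋ : ℝ) * (∑ i, x i)
    - (⌊∑ i, x i⌋ : ℝ) * ((⌊∑ i, x i⌋ : ℝ) + 1) / 2 with hw
  have hmem : w ∈ {z : ℝ | (x, z) ∈ convexHull ℝ (Stmt3Aux.Gset n)} :=
    Stmt3Aux.mem_hull x hx
  have hlb : ∀ z ∈ {z : ℝ | (x, z) ∈ convexHull ℝ (Stmt3Aux.Gset n)}, w ≤ z := by
    intro z hz
    have := Stmt3Aux.lower_bound (n := n) ⌊∑ i, x i⌋ hz
    simpa [hw] using this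
  exact le_antisymm (csInf_le ⟨w, fun z hz => hlb z hz⟩ hmem) (le_csInf ⟨w, hmem⟩ hlb)
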